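/- Let i be a vertex of a graph G with eccentricity ε_i (the maximum distance from i to any vertex of G). Then the number of distinct poles of the rational function φ^{G\i}/φ^G (equivalently, the size of the eigenvalue support of i) is at least ε_i + 1. -/

import Mathlib

open Polynomial Matrix Finset

noncomputable def phiDel {V : Type*} [Fintype V] [DecidableEq V]
    (G : SimpleGraph V) [DecidableRel G.Adj] (S : Finset V) : Polynomial ℝ :=
  ((G.adjMatrix ℝ).submatrix (Subtype.val : {v // v ∉ S} → V) Subtype.val).charpoly

set_option linter.unusedSectionVars false


section Cofactor
variable {R : Type*} [CommRing R] {V : Type*} [Fintype V] [DecidableEq V]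
variable {m : Type*} [Fintype m] [DecidableEq m]

lemma charmatrix_submatrix_inj (A : Matrix V V R) (f : m → V) (hf : Function.Injective f) :
    charmatrix (A.submatrix f f) = (charmatrix A).submatrix f f := by
  ext a b
  by_cases h : a = b
  · subst h; simp [charmatrix_apply]
  · simp [charmatrix_apply, diagonal_apply, h, hf.ne h]

lemma adjugate_diag_eq (M : Matrix V V R) (i : V) :
    adjugate M i i = (M.submatrix (Subtype.val : {v // v ≠ i} → V) Subtype.val).det := by
  set n := Fintype.card {v // v ≠ i} with hn
  obtain ⟨e0⟩ : Nonempty ({v // v ≠ i} ≃ Fin n) := ⟨Fintype.equivFin _⟩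
  let e : Fin (n + 1) ≃ V :=
    (finSuccEquiv n).trans ((e0.symm.optionCongr).trans (Equiv.optionSubtypeNe i))
  have he0 : e 0 = i := by simp [e, ← Equiv.optionCongr_symm]
  have hesucc : ∀ k : Fin n, e k.succ = (e0.symm k).val := by
    intro k; simp [e, ← Equiv.optionCongr_symm]
  have h1 : (adjugate M).submatrix e e = adjugate (M.submatrix e e) :=
    (adjugate_submatrix_equiv_self e M).symm
  have h2 : adjugate M i i = adjugate (M.submatrix e e) 0 0 := by
    rw [← h1, submatrix_apply, he0]
  rw [h2, adjugate_fin_succ_eq_det_submatrix]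
  norm_num [Fin.succAbove_zero]
  have h3 : M.submatrix (⇑e ∘ Fin.succ) (⇑e ∘ Fin.succ)
      = ((M.submatrix (Subtype.val : {v // v ≠ i} → V) Subtype.val).submatrix e0.symm e0.symm :
        Matrix (Fin n) (Fin n) R) := by
    ext a b
    simp only [submatrix_apply, Function.comp_apply]
    rw [hesucc a, hesucc b]
  rw [h3]
  exact det_submatrix_equiv_self e0.symm (M.submatrix (Subtype.val : {v // v ≠ i} → V) Subtype.val)

end Cofactor

section PhiDel
variable {V : Type*} [Fintype V] [DecidableEq V] (G : SimpleGraph V) [DecidableRel G.Adj]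

lemma phiDel_empty : phiDel G ∅ = (G.adjMatrix ℝ).charpoly := by
  unfold phiDel
  let e : {v : V // v ∉ (∅ : Finset V)} ≃ V := Equiv.subtypeUnivEquiv (by simp)
  have : (G.adjMatrix ℝ).submatrix (Subtype.val : {v // v ∉ (∅ : Finset V)} → V) Subtype.val
      = reindex e.symm e.symm (G.adjMatrix ℝ) := by
    ext a b; rfl
  rw [this, charpoly_reindex]

lemma phiDel_singleton (i : V) :
    phiDel G {i} = adjugate (charmatrix (G.adjMatrix ℝ)) i i := by
  unfold phiDel
  rw [adjugate_diag_eq]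
  let e : {v : V // v ∉ ({i} : Finset V)} ≃ {v : V // v ≠ i} :=
    Equiv.subtypeEquivRight (by simp)
  have h : (G.adjMatrix ℝ).submatrix (Subtype.val : {v // v ∉ ({i} : Finset V)} → V) Subtype.val
      = ((G.adjMatrix ℝ).submatrix (Subtype.val : {v // v ≠ i} → V) Subtype.val).submatrix e e :=
    by ext a b; rfl
  simp only [Matrix.charpoly]
  rw [h, charmatrix_submatrix_inj _ _ (e.injective),
    det_submatrix_equiv_self, charmatrix_submatrix_inj _ _ (Subtype.val_injective)]

end PhiDel


section Spectral
variable {V : Type*} [Fintype V] [DecidableEq V]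
variable {A : Matrix V V ℝ} (hA : A.IsHermitian)

lemma spectral_real :
    A = (hA.eigenvectorUnitary : Matrix V V ℝ) * diagonal hA.eigenvalues
      * (hA.eigenvectorUnitary : Matrix V V ℝ)ᵀ := by
  conv_lhs => rw [hA.spectral_theorem, Unitary.conjStarAlgAut_apply]
  rw [Matrix.star_eq_conjTranspose, conjTranspose_eq_transpose_of_trivial]
  simp [RCLike.ofReal_real_eq_id]

lemma hUUt : (hA.eigenvectorUnitary : Matrix V V ℝ) * (hA.eigenvectorUnitary : Matrix V V ℝ)ᵀ = 1 := by
  have := (Unitary.mem_iff.mp hA.eigenvectorUnitary.2).2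
  rwa [Matrix.star_eq_conjTranspose, conjTranspose_eq_transpose_of_trivial] at this

lemma hUtU : (hA.eigenvectorUnitary : Matrix V V ℝ)ᵀ * (hA.eigenvectorUnitary : Matrix V V ℝ) = 1 := by
  have := (Unitary.mem_iff.mp hA.eigenvectorUnitary.2).1
  rwa [Matrix.star_eq_conjTranspose, conjTranspose_eq_transpose_of_trivial] at this

end Spectral

section Spectral2
variable {V : Type*} [Fintype V] [DecidableEq V]
variable {A : Matrix V V ℝ} (hA : A.IsHermitian)

lemma charmatrix_conj :
    charmatrix A =
      (C : ℝ →+* ℝ[X]).mapMatrix (hA.eigenvectorUnitary : Matrix V V ℝ)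
        * charmatrix (diagonal hA.eigenvalues)
        * (C : ℝ →+* ℝ[X]).mapMatrix (hA.eigenvectorUnitary : Matrix V V ℝ)ᵀ := by
  set U := (hA.eigenvectorUnitary : Matrix V V ℝ) with hU
  have h1 : (C : ℝ →+* ℝ[X]).mapMatrix U * (C : ℝ →+* ℝ[X]).mapMatrix Uᵀ = 1 := by
    rw [← _root_.map_mul, hUUt hA, _root_.map_one]
  unfold charmatrix
  rw [mul_sub, sub_mul, ← _root_.map_mul, ← _root_.map_mul]
  congr 1
  · have hcomm : Commute (scalar V (X : ℝ[X])) ((C : ℝ →+* ℝ[X]).mapMatrix Uᵀ) :=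
      scalar_commute _ (fun r' => Commute.all _ _) _
    rw [mul_assoc, hcomm.eq, ← mul_assoc, h1, one_mul]
  · rw [← spectral_real hA]

end Spectral2

section S3
variable {V : Type*} [Fintype V] [DecidableEq V]

lemma charmatrix_diagonal (d : V → ℝ) :
    charmatrix (diagonal d) = diagonal (fun j => (X : ℝ[X]) - C (d j)) := by
  ext a b
  by_cases h : a = b
  · subst h; simp [charmatrix_apply, diagonal_apply]
  · simp [charmatrix_apply, diagonal_apply, h]

variable {A : Matrix V V ℝ} (hA : A.IsHermitian)

lemma hPR : (C : ℝ →+* ℝ[X]).mapMatrix (hA.eigenvectorUnitary : Matrix V V ℝ)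
    * (C : ℝ →+* ℝ[X]).mapMatrix (hA.eigenvectorUnitary : Matrix V V ℝ)ᵀ = 1 := by
  rw [← _root_.map_mul, hUUt hA, _root_.map_one]

lemma hRP : (C : ℝ →+* ℝ[X]).mapMatrix (hA.eigenvectorUnitary : Matrix V V ℝ)ᵀ
    * (C : ℝ →+* ℝ[X]).mapMatrix (hA.eigenvectorUnitary : Matrix V V ℝ) = 1 := by
  rw [← _root_.map_mul, hUtU hA, _root_.map_one]

lemma adjugate_charmatrix_conj :
    adjugate (charmatrix A) =
      (C : ℝ →+* ℝ[X]).mapMatrix (hA.eigenvectorUnitary : Matrix V V ℝ)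
        * adjugate (charmatrix (diagonal hA.eigenvalues))
        * (C : ℝ →+* ℝ[X]).mapMatrix (hA.eigenvectorUnitary : Matrix V V ℝ)ᵀ := by
  set P := (C : ℝ →+* ℝ[X]).mapMatrix (hA.eigenvectorUnitary : Matrix V V ℝ) with hP
  set R := (C : ℝ →+* ℝ[X]).mapMatrix (hA.eigenvectorUnitary : Matrix V V ℝ)ᵀ with hR
  set Q := charmatrix (diagonal hA.eigenvalues) with hQ
  have h1 : P * R = 1 := hPR hA
  have h2 : R * P = 1 := hRP hA
  have hadjP : adjugate P = P.det • R := by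
    calc adjugate P = adjugate P * (P * R) := by rw [h1, mul_one]
    _ = (adjugate P * P) * R := by rw [mul_assoc]
    _ = P.det • R := by rw [adjugate_mul, smul_mul_assoc, one_mul]
  have hadjR : adjugate R = R.det • P := by
    calc adjugate R = adjugate R * (R * P) := by rw [h2, mul_one]
    _ = (adjugate R * R) * P := by rw [mul_assoc]
    _ = R.det • P := by rw [adjugate_mul, smul_mul_assoc, one_mul]
  have hdet : R.det * P.det = 1 := by
    rw [← det_mul, h2, det_one]
  rw [charmatrix_conj hA, ← hP, ← hR, adjugate_mul_distrib, adjugate_mul_distrib,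
    hadjP, hadjR]
  simp only [smul_mul_assoc, mul_smul_comm, smul_smul, mul_assoc]
  rw [mul_comm P.det, hdet, one_smul]

lemma adjugate_charmatrix_apply (i : V) :
    adjugate (charmatrix A) i i =
      ∑ j, (C ((hA.eigenvectorUnitary : Matrix V V ℝ) i j))^2
        * ∏ k ∈ univ.erase j, ((X : ℝ[X]) - C (hA.eigenvalues k)) := by
  rw [adjugate_charmatrix_conj hA, _root_.charmatrix_diagonal, adjugate_diagonal]
  rw [mul_assoc, mul_apply]
  refine Finset.sum_congr rfl fun j _ => ?_
  rw [mul_apply]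
  rw [Finset.sum_eq_single j (fun k _ hk => by simp [diagonal_apply_ne _ (Ne.symm hk)]) (by simp)]
  simp only [diagonal_apply_eq, RingHom.mapMatrix_apply, Matrix.map_apply, transpose_apply]
  ring

lemma charpoly_eq_prod : A.charpoly = ∏ j, ((X : ℝ[X]) - C (hA.eigenvalues j)) := by
  have h1 : ((C : ℝ →+* ℝ[X]).mapMatrix (hA.eigenvectorUnitary : Matrix V V ℝ)).det
      * ((C : ℝ →+* ℝ[X]).mapMatrix (hA.eigenvectorUnitary : Matrix V V ℝ)ᵀ).det = 1 := by
    rw [← det_mul, hPR hA, det_one]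
  simp only [Matrix.charpoly]
  rw [charmatrix_conj hA, det_mul, det_mul, _root_.charmatrix_diagonal, det_diagonal]
  linear_combination (∏ j, ((X : ℝ[X]) - C (hA.eigenvalues j))) * h1

end S3
section S4
variable {V : Type*} [Fintype V] [DecidableEq V]
variable {A : Matrix V V ℝ} (hA : A.IsHermitian)

lemma pow_conj (n : ℕ) :
    A ^ n = (hA.eigenvectorUnitary : Matrix V V ℝ)
      * diagonal (fun j => hA.eigenvalues j ^ n)
      * (hA.eigenvectorUnitary : Matrix V V ℝ)ᵀ := by
  set U := (hA.eigenvectorUnitary : Matrix V V ℝ) with hU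
  induction n with
  | zero =>
    simp only [pow_zero]
    have : diagonal (fun _ : V => (1 : ℝ)) = 1 := diagonal_one
    rw [this, mul_one, hUUt hA]
  | succ k ih =>
    have key : (U * diagonal (fun j => hA.eigenvalues j ^ k) * Uᵀ)
        * (U * diagonal hA.eigenvalues * Uᵀ)
        = U * diagonal (fun j => hA.eigenvalues j ^ (k + 1)) * Uᵀ := by
      simp only [mul_assoc]
      rw [← mul_assoc Uᵀ U, hUtU hA, one_mul,
        ← mul_assoc (diagonal (fun j => hA.eigenvalues j ^ k)) (diagonal hA.eigenvalues),
        diagonal_mul_diagonal]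
      simp [pow_succ]
    rw [pow_succ, ih, ← key, ← spectral_real hA]

lemma aeval_conj (p : ℝ[X]) :
    aeval A p = (hA.eigenvectorUnitary : Matrix V V ℝ)
      * diagonal (fun j => p.eval (hA.eigenvalues j))
      * (hA.eigenvectorUnitary : Matrix V V ℝ)ᵀ := by
  set U := (hA.eigenvectorUnitary : Matrix V V ℝ) with hU
  induction p using Polynomial.induction_on' with
  | add p q hp hq =>
    have : (fun j => (p + q).eval (hA.eigenvalues j))
        = (fun j => p.eval (hA.eigenvalues j)) + (fun j => q.eval (hA.eigenvalues j)) := by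
      funext j; simp [eval_add]
    rw [map_add, hp, hq, ← add_mul, ← mul_add, diagonal_add]
    congr 2
    funext j
    simp [eval_add]
  | monomial n a =>
    rw [aeval_monomial, ← Algebra.smul_def, pow_conj hA n]
    have : (fun j => ((monomial n a : ℝ[X]).eval (hA.eigenvalues j)))
        = fun j => a • (hA.eigenvalues j ^ n) := by
      funext j; simp [eval_monomial]
    rw [this, show (fun j => a • hA.eigenvalues j ^ n) = a • (fun j => hA.eigenvalues j ^ n)
      from rfl, diagonal_smul, mul_smul_comm, smul_mul_assoc]

lemma aeval_entry (p : ℝ[X]) (x y : V) :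
    (aeval A p) x y = ∑ j, (hA.eigenvectorUnitary : Matrix V V ℝ) x j
      * p.eval (hA.eigenvalues j) * (hA.eigenvectorUnitary : Matrix V V ℝ) y j := by
  rw [aeval_conj hA, mul_assoc, mul_apply]
  refine Finset.sum_congr rfl fun j _ => ?_
  rw [mul_apply]
  rw [Finset.sum_eq_single j (fun k _ hk => by simp [diagonal_apply_ne _ (Ne.symm hk)]) (by simp)]
  simp only [diagonal_apply_eq, transpose_apply]
  ring

end S4

section Mult
variable {V : Type*} [Fintype V] [DecidableEq V]

lemma g_eval_ne (μ : V → ℝ) (θ : ℝ) :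
    (∏ k ∈ univ.filter (fun k => μ k ≠ θ), ((X : ℝ[X]) - C (μ k))).eval θ ≠ 0 := by
  rw [eval_prod]
  refine Finset.prod_ne_zero_iff.mpr fun k hk => ?_
  simp only [eval_sub, eval_X, eval_C]
  exact sub_ne_zero.mpr (Ne.symm (mem_filter.mp hk).2)

lemma prod_split (μ : V → ℝ) (θ : ℝ) :
    ∏ j, ((X : ℝ[X]) - C (μ j))
      = ((X : ℝ[X]) - C θ) ^ (univ.filter (fun j => μ j = θ)).card
        * ∏ k ∈ univ.filter (fun k => μ k ≠ θ), ((X : ℝ[X]) - C (μ k)) := by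
  rw [← prod_filter_mul_prod_filter_not univ (fun j => μ j = θ)]
  congr 1
  rw [Finset.prod_congr rfl (fun j hj => by rw [(mem_filter.mp hj).2]), Finset.prod_const]

lemma rm_empty (μ : V → ℝ) (θ : ℝ) :
    rootMultiplicity θ (∏ j, ((X : ℝ[X]) - C (μ j)))
      = (univ.filter (fun j => μ j = θ)).card := by
  rw [prod_split μ θ, rootMultiplicity_mul, rootMultiplicity_X_sub_C_pow,
    rootMultiplicity_eq_zero (fun h => g_eval_ne μ θ h), add_zero]
  exact mul_ne_zero (pow_ne_zero _ (X_sub_C_ne_zero θ))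
    (fun h => g_eval_ne μ θ (by rw [h]; simp))

lemma rm_support (μ c : V → ℝ) (θ : ℝ) (hex : ∃ j, μ j = θ ∧ c j ≠ 0) :
    rootMultiplicity θ (∑ j, (C (c j))^2 * ∏ k ∈ univ.erase j, ((X : ℝ[X]) - C (μ k)))
      < (univ.filter (fun j => μ j = θ)).card := by
  set m := (univ.filter (fun j => μ j = θ)).card with hm
  set g := ∏ k ∈ univ.filter (fun k => μ k ≠ θ), ((X : ℝ[X]) - C (μ k)) with hg
  obtain ⟨j0, hj0, hcj0⟩ := hex
  have hm1 : 1 ≤ m := Finset.card_pos.mpr ⟨j0, by simp [hj0]⟩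
  have herase : ∀ j, μ j = θ →
      ∏ k ∈ univ.erase j, ((X : ℝ[X]) - C (μ k)) = ((X : ℝ[X]) - C θ) ^ (m - 1) * g := by
    intro j hj
    rw [← prod_filter_mul_prod_filter_not (univ.erase j) (fun k => μ k = θ)]
    congr 1
    · rw [Finset.prod_congr rfl (fun k hk => by rw [(mem_filter.mp hk).2]), Finset.prod_const]
      congr 1
      have : (univ.erase j).filter (fun k => μ k = θ)
          = (univ.filter (fun k => μ k = θ)).erase j := by
        ext k; simp [mem_erase, mem_filter, and_comm]
      rw [this, Finset.card_erase_of_mem (by simp [hj])]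
    · congr 1
      ext k
      simp only [mem_filter, mem_erase, mem_univ, true_and, and_true]
      constructor
      · exact fun h => h.2
      · exact fun h => ⟨fun hkj => h (hkj ▸ hj), h⟩
  have herase' : ∀ j, ¬ (μ j = θ) →
      ∏ k ∈ univ.erase j, ((X : ℝ[X]) - C (μ k)) = ((X : ℝ[X]) - C θ) ^ m
        * ∏ k ∈ (univ.erase j).filter (fun k => μ k ≠ θ), ((X : ℝ[X]) - C (μ k)) := by
    intro j hj
    rw [← prod_filter_mul_prod_filter_not (univ.erase j) (fun k => μ k = θ)]
    congr 1
    rw [Finset.prod_congr rfl (fun k hk => by rw [(mem_filter.mp hk).2]), Finset.prod_const]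
    congr 1
    congr 1
    ext k
    simp only [mem_filter, mem_erase, mem_univ, true_and, and_true]
    exact ⟨fun h => h.2, fun h => ⟨fun hkj => hj (hkj ▸ h), h⟩⟩
  set S := ∑ j ∈ univ.filter (fun j => μ j = θ), (c j)^2 with hS
  set H := ∑ j ∈ univ.filter (fun j => ¬ μ j = θ), (C (c j))^2
      * ∏ k ∈ (univ.erase j).filter (fun k => μ k ≠ θ), ((X : ℝ[X]) - C (μ k)) with hH
  have hsplit : (∑ j, (C (c j))^2 * ∏ k ∈ univ.erase j, ((X : ℝ[X]) - C (μ k)))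
      = ((X : ℝ[X]) - C θ) ^ (m - 1) * (C S * g + ((X : ℝ[X]) - C θ) * H) := by
    rw [← Finset.sum_filter_add_sum_filter_not univ (fun j => μ j = θ)]
    have e1 : ∑ j ∈ univ.filter (fun j => μ j = θ),
        (C (c j))^2 * ∏ k ∈ univ.erase j, ((X : ℝ[X]) - C (μ k))
        = ((X : ℝ[X]) - C θ) ^ (m - 1) * (C S * g) := by
      rw [Finset.sum_congr rfl (fun j hj => by rw [herase j (mem_filter.mp hj).2]),
        ← Finset.sum_mul, hS, map_sum]
      push_cast [map_pow]
      ring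
    have e2 : ∑ j ∈ univ.filter (fun j => ¬ μ j = θ),
        (C (c j))^2 * ∏ k ∈ univ.erase j, ((X : ℝ[X]) - C (μ k))
        = ((X : ℝ[X]) - C θ) ^ (m - 1) * (((X : ℝ[X]) - C θ) * H) := by
      rw [Finset.sum_congr rfl (fun j hj => by rw [herase' j (mem_filter.mp hj).2])]
      rw [hH, Finset.mul_sum, Finset.mul_sum]
      refine Finset.sum_congr rfl fun j hj => ?_
      have : ((X : ℝ[X]) - C θ) ^ m = ((X : ℝ[X]) - C θ) ^ (m - 1) * ((X : ℝ[X]) - C θ) := by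
        conv_lhs => rw [show m = (m - 1) + 1 from (Nat.succ_pred_eq_of_pos hm1).symm]
        rw [pow_succ]
      rw [this]; ring
    rw [e1, e2, mul_add]
  have hSpos : 0 < S := by
    refine Finset.sum_pos' (fun j _ => sq_nonneg _) ⟨j0, by simp [hj0], ?_⟩
    positivity
  have hreval : (C S * g + ((X : ℝ[X]) - C θ) * H).eval θ ≠ 0 := by
    simp only [eval_add, eval_mul, eval_sub, eval_X, eval_C, sub_self, zero_mul, add_zero]
    exact mul_ne_zero (ne_of_gt hSpos) (g_eval_ne μ θ)
  rw [hsplit, rootMultiplicity_mul, rootMultiplicity_X_sub_C_pow,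
    rootMultiplicity_eq_zero (fun h => hreval h), add_zero]
  · omega
  · exact mul_ne_zero (pow_ne_zero _ (X_sub_C_ne_zero θ))
      (fun h => hreval (by rw [h]; simp))

end Mult

section Main
variable {V : Type*} [Fintype V] [DecidableEq V]

lemma adjMatrix_isHermitian (G : SimpleGraph V) [DecidableRel G.Adj] :
    (G.adjMatrix ℝ).IsHermitian := by
  rw [Matrix.IsHermitian, conjTranspose_eq_transpose_of_trivial, SimpleGraph.transpose_adjMatrix]

theorem card_poles_ge_eccentricity_add_one'
    (G : SimpleGraph V) [DecidableRel G.Adj] (hconn : G.Connected) (i : V) :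
    ∀ v : V, G.dist i v + 1 ≤
      {θ : ℝ | Polynomial.rootMultiplicity θ (phiDel G {i}) <
        Polynomial.rootMultiplicity θ (phiDel G ∅)}.ncard := by
  intro v
  set A := G.adjMatrix ℝ with hAdef
  have hA : A.IsHermitian := adjMatrix_isHermitian G
  set U := (hA.eigenvectorUnitary : Matrix V V ℝ) with hUdef
  set μ := hA.eigenvalues with hμdef
  set Pset := {θ : ℝ | Polynomial.rootMultiplicity θ (phiDel G {i}) <
        Polynomial.rootMultiplicity θ (phiDel G ∅)} with hPset
  set Pfin : Finset ℝ := (univ.filter (fun j => U i j ≠ 0)).image μ with hPfin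
  -- μ-description of the two root multiplicities
  have hrm0 : ∀ θ : ℝ, rootMultiplicity θ (phiDel G ∅)
      = (univ.filter (fun j => μ j = θ)).card := by
    intro θ
    rw [phiDel_empty, charpoly_eq_prod hA, rm_empty]
  have hrm1 : ∀ θ : ℝ, (∃ j, μ j = θ ∧ U i j ≠ 0) →
      rootMultiplicity θ (phiDel G {i}) < (univ.filter (fun j => μ j = θ)).card := by
    intro θ hex
    rw [phiDel_singleton, adjugate_charmatrix_apply hA i]
    exact rm_support μ (fun j => U i j) θ hex
  -- Pfin ⊆ Pset
  have hsub : (↑Pfin : Set ℝ) ⊆ Pset := by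
    intro θ hθ
    simp only [hPfin, coe_image, Set.mem_image, mem_coe, mem_filter, mem_univ, true_and] at hθ
    obtain ⟨j, hj, hjθ⟩ := hθ
    have := hrm1 θ ⟨j, hjθ, hj⟩
    rw [hPset, Set.mem_setOf_eq, hrm0 θ]
    exact this
  -- Pset is finite
  have hfin : Pset.Finite := by
    have hne : phiDel G ∅ ≠ 0 := by
      rw [phiDel_empty]
      exact (Matrix.charpoly_monic A).ne_zero
    refine Set.Finite.subset (Polynomial.finite_setOf_isRoot hne) ?_
    intro θ hθ
    simp only [hPset, Set.mem_setOf_eq] at hθ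
    simp only [Set.mem_setOf_eq]
    by_contra h
    rw [rootMultiplicity_eq_zero h] at hθ
    omega
  -- main counting argument
  have hcard : G.dist i v + 1 ≤ Pfin.card := by
    by_contra hcon
    push_neg at hcon
    set d := G.dist i v with hd
    have hle : Pfin.card ≤ d := by omega
    set q : ℝ[X] := (∏ θ ∈ Pfin, ((X : ℝ[X]) - C θ)) * X ^ (d - Pfin.card) with hq
    have hqmon : q.Monic :=
      (monic_prod_of_monic _ _ fun θ _ => monic_X_sub_C θ).mul (monic_X_pow _)
    have hqdeg : q.natDegree = d := by
      rw [hq, natDegree_mul (monic_prod_of_monic _ _ fun θ _ => monic_X_sub_C θ).ne_zero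
        (pow_ne_zero _ X_ne_zero), natDegree_prod _ _ (fun θ _ => X_sub_C_ne_zero θ),
        natDegree_X_pow]
      simp only [natDegree_X_sub_C, Finset.sum_const, smul_eq_mul, mul_one]
      omega
    have hqeval : ∀ j, U i j ≠ 0 → q.eval (μ j) = 0 := by
      intro j hj
      rw [hq, eval_mul, eval_prod]
      have hmem : μ j ∈ Pfin := Finset.mem_image.mpr ⟨j, by simp [hj], rfl⟩
      rw [Finset.prod_eq_zero hmem (by simp), zero_mul]
    have hzero : (aeval A q) i v = 0 := by
      rw [aeval_entry hA]
      refine Finset.sum_eq_zero fun j _ => ?_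
      simp only [← hUdef, ← hμdef]
      by_cases hj : U i j = 0
      · rw [hj, zero_mul, zero_mul]
      · rw [hqeval j hj, mul_zero, zero_mul]
    have hAk : ∀ k, k < d → (A ^ k) i v = 0 := by
      intro k hk
      rw [hAdef, SimpleGraph.adjMatrix_pow_apply_eq_card_walk]
      haveI : IsEmpty ({p : G.Walk i v | p.length = k} : Set _) :=
        ⟨fun p => absurd (SimpleGraph.dist_le p.1) (by
          have h2 := p.2; simp only [Set.mem_setOf_eq] at h2; omega)⟩
      rw [Fintype.card_eq_zero]
      norm_num
    have hAd : 0 < (A ^ d) i v := by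
      rw [hAdef, SimpleGraph.adjMatrix_pow_apply_eq_card_walk]
      obtain ⟨p, hp⟩ := hconn.exists_walk_length_eq_dist i v
      have hne : Nonempty ({p : G.Walk i v | p.length = d} : Set _) := ⟨⟨p, hp⟩⟩
      exact_mod_cast Fintype.card_pos_iff.mpr hne
    have hsum : (aeval A q) i v = (A ^ d) i v := by
      rw [aeval_eq_sum_range' (show q.natDegree < d + 1 by omega) A]
      rw [Matrix.sum_apply]
      rw [Finset.sum_range_succ]
      rw [Finset.sum_eq_zero (fun k hk => by
        rw [Matrix.smul_apply, hAk k (Finset.mem_range.mp hk), smul_zero]), zero_add]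
      have hcoef : q.coeff d = 1 := by
        rw [← hqdeg]; exact hqmon.coeff_natDegree
      rw [Matrix.smul_apply, hcoef, one_smul]
    rw [hzero] at hsum
    exact absurd hsum.symm (ne_of_gt hAd)
  calc G.dist i v + 1 ≤ Pfin.card := hcard
  _ = (↑Pfin : Set ℝ).ncard := (Set.ncard_coe_finset _).symm
  _ ≤ Pset.ncard := Set.ncard_le_ncard hsub hfin

end Main

/-- The number of distinct poles of `φ^{G∖i}/φ^G` is at least the eccentricity of `i`
plus one: for every vertex `v`, `dist i v + 1` is at most the number of poles. -/
theorem card_poles_ge_eccentricity_add_one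
    {V : Type*} [Fintype V] [DecidableEq V]
    (G : SimpleGraph V) [DecidableRel G.Adj] (hconn : G.Connected) (i : V) :
    ∀ v : V, G.dist i v + 1 ≤
      {θ : ℝ | Polynomial.rootMultiplicity θ (phiDel G {i}) <
        Polynomial.rootMultiplicity θ (phiDel G ∅)}.ncard := by
  exact card_poles_ge_eccentricity_add_one' G hconn i
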